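/- Let H be a power series map with JH strongly nilpotent with index p, and let T be a labelled typed proper rooted tree of height ≥ p with spine (v_0,…,v_p) as above. Then the sum of energies over the equivalence class [T] of T (trees agreeing with T except for the types of v_1,…,v_{p−1}) vanishes: Σ_{T' ∈ [T]} E_H(T') = 0. -/

import Mathlib

noncomputable section
/-- `1/β!` as an element of the field `k`. -/
def invFact {k : Type*} [Field k] {n : ℕ} (β : Fin n →₀ ℕ) : k :=
  (β.prod fun _ m => (m.factorial : k))⁻¹

/-- Embed a multi-index in the variables `X_1,…,X_n` into the `ℓ`-th block of the `n·p`
variables `X⁽ℓ⁾_m`. -/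
def emb {n p : ℕ} (ℓ : Fin p) (β : Fin n →₀ ℕ) : (Fin p × Fin n) →₀ ℕ :=
  Finsupp.mapDomain (fun m => (ℓ, m)) β

/-- Restrict a multi-index on the `n·p` variables to its `ℓ`-th block. -/
def blockRestrict {n p : ℕ} (γ : (Fin p × Fin n) →₀ ℕ) (ℓ : Fin p) : Fin n →₀ ℕ :=
  Finsupp.comapDomain (fun m => (ℓ, m)) γ (fun _ _ _ _ h => congrArg Prod.snd h)

/-- The `(i,j)` entry of the Jacobian matrix `JH(X⁽ℓ⁾)` of the power series map `H` with
coefficients `H_i = Σ_α (Hc i α / α!) X^α`, evaluated at the `ℓ`-th block of variables: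
`(JH)_{i,j}(X⁽ℓ⁾) = Σ_α (Hc i (α+e_j) / α!) (X⁽ℓ⁾)^α`, as a power series in the `n·p`
variables `X⁽ℓ⁾_m`. -/
def jacBlock {k : Type*} [Field k] {n p : ℕ} (Hc : Fin n → (Fin n →₀ ℕ) → k)
    (ℓ : Fin p) (i j : Fin n) : MvPowerSeries (Fin p × Fin n) k :=
  fun γ => if ∀ q ∈ γ.support, q.1 = ℓ then
    Hc i (blockRestrict γ ℓ + Finsupp.single j 1) * invFact (blockRestrict γ ℓ)
  else 0

/-- The label set `[α] = {(j,k) : 1 ≤ k ≤ α_j}` of leaf labels for the multi-index `α`. -/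
abbrev Lbl (n : ℕ) (α : Fin n →₀ ℕ) : Type := (j : Fin n) × Fin (α j)

/-- A proper rooted tree with leaves labelled bijectively by `Lbl n α` is encoded by the
laminar family of the leaf-label sets of the subtrees of its vertices: the family contains
the full set (the root) and all singletons (the leaves), does not contain `∅`, and any two
members are nested or disjoint.  The vertices of the tree are the members of the family,
the leaves being the singletons; since every internal vertex of a proper tree has at least
two children, this correspondence is a bijection onto isomorphism classes. -/
def Laminar {n : ℕ} {α : Fin n →₀ ℕ} (F : Finset (Finset (Lbl n α))) : Prop :=
  Finset.univ ∈ F ∧ (∀ x : Lbl n α, {x} ∈ F) ∧ (∅ : Finset (Lbl n α)) ∉ F ∧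
    ∀ S ∈ F, ∀ T ∈ F, S ⊆ T ∨ T ⊆ S ∨ Disjoint S T

/-- The depth (generation) of the vertex `S`: the number of strict ancestors of `S`. -/
def depthT {n : ℕ} {α : Fin n →₀ ℕ} (F : Finset (Finset (Lbl n α)))
    (S : Finset (Lbl n α)) : ℕ :=
  (F.filter fun T => S ⊂ T).card

/-- The height of the tree: the maximal depth of a vertex. -/
def heightT {n : ℕ} {α : Fin n →₀ ℕ} (F : Finset (Finset (Lbl n α))) : ℕ :=
  F.sup (depthT F)

/-- The children of the vertex `S`: the maximal members of `F` strictly below `S`. -/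
def childrenT {n : ℕ} {α : Fin n →₀ ℕ} (F : Finset (Finset (Lbl n α)))
    (S : Finset (Lbl n α)) : Finset (Finset (Lbl n α)) :=
  F.filter fun C => C ⊂ S ∧ ¬∃ T ∈ F, C ⊂ T ∧ T ⊂ S

/-- The outdegree `μ(S)` of the vertex `S` with respect to the typing `τ`: the multi-index
counting the children of `S` by type. -/
noncomputable def outdeg {n : ℕ} {α : Fin n →₀ ℕ} (F : Finset (Finset (Lbl n α)))
    (τ : Finset (Lbl n α) → Fin n) (S : Finset (Lbl n α)) : Fin n →₀ ℕ :=
  ∑ C ∈ childrenT F S, Finsupp.single (τ C) 1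

/-- The energy `E_H(T) = ∏_{S internal} H_{τ(S), μ(S)}` of a typed labelled tree;
the internal vertices are the non-singleton members of `F`. -/
noncomputable def energy {k : Type*} [Field k] {n : ℕ} {α : Fin n →₀ ℕ}
    (Hc : Fin n → (Fin n →₀ ℕ) → k) (F : Finset (Finset (Lbl n α)))
    (τ : Finset (Lbl n α) → Fin n) : k :=
  ∏ S ∈ F.filter (fun S => 1 < S.card), Hc (τ S) (outdeg F τ S)

/-- The data of a typed labelled tree: a family of subsets of the label set, together with a
typing function (normalized to the value `i` off the family, so that each isomorphism class
of tree is encoded exactly once). -/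
abbrev TreeData (n : ℕ) (α : Fin n →₀ ℕ) : Type :=
  Finset (Finset (Lbl n α)) × (Finset (Lbl n α) → Fin n)

/-- The tree data `T` encodes an element of `𝕊_{i,α}`: the family is laminar, the root
(the full set) has type `i`, each leaf (singleton) `{(j,k)}` has type `j`, and the typing is
normalized to `i` off the family. -/
def Good {n : ℕ} {α : Fin n →₀ ℕ} (i : Fin n) (T : TreeData n α) : Prop :=
  Laminar T.1 ∧ T.2 Finset.univ = i ∧ (∀ x : Lbl n α, T.2 {x} = x.1) ∧
    ∀ S ∉ T.1, T.2 S = i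
/-- The lexicographic linear order on the label set `[α]`. -/
noncomputable instance {n : ℕ} {α : Fin n →₀ ℕ} : LinearOrder (Lbl n α) :=
  LinearOrder.lift' (fun x => toLex ((x.1 : ℕ), (x.2 : ℕ))) (by
    rintro ⟨a, b⟩ ⟨c, d⟩ h
    have h' : ((a : ℕ), (b : ℕ)) = ((c : ℕ), (d : ℕ)) := h
    have h1 : (a : ℕ) = (c : ℕ) := congrArg Prod.fst h'
    have h2 : (b : ℕ) = (d : ℕ) := congrArg Prod.snd h'
    have hac : a = c := Fin.val_injective h1
    subst hac
    have hbd : b = d := Fin.val_injective h2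
    subst hbd
    rfl)

/-- The leaves of `F` lying in generation `p` or higher. -/
noncomputable def deepLeaves {n : ℕ} {α : Fin n →₀ ℕ} (p : ℕ)
    (F : Finset (Finset (Lbl n α))) : Finset (Lbl n α) :=
  Finset.univ.filter fun x => p ≤ depthT F {x}

open scoped Classical in
/-- The middle spine vertices `v₁, …, v_{p-1}` of a tree of height `≥ p`: writing `x*` for the
lexicographically greatest leaf at depth `≥ p` and `D` for its depth, these are the ancestors
of `x*` of depths `D - p + 1, …, D - 1`. -/
noncomputable def spineMid {n : ℕ} {α : Fin n →₀ ℕ} (p : ℕ)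
    (F : Finset (Finset (Lbl n α))) : Finset (Finset (Lbl n α)) :=
  if h : (deepLeaves p F).Nonempty then
    F.filter fun S => (deepLeaves p F).max' h ∈ S ∧
      depthT F {(deepLeaves p F).max' h} - p + 1 ≤ depthT F S ∧
      depthT F S ≤ depthT F {(deepLeaves p F).max' h} - 1
  else ∅

/-- Two trees are related iff they are identical except possibly for the types of the middle
spine vertices `v₁, …, v_{p-1}`. -/
def SpineRel {n : ℕ} {α : Fin n →₀ ℕ} (p : ℕ) (T T' : TreeData n α) : Prop :=
  T.1 = T'.1 ∧ ∀ S ∉ spineMid p T.1, T.2 S = T'.2 S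

/-- The coefficient `H_{i,β}`, i.e. `β!` times the coefficient of `X^β` in the power series
`H_i`, so that `H_i = Σ_β (H_{i,β}/β!) X^β`. -/
def coefSc {k : Type*} [Field k] {n : ℕ} (H : Fin n → MvPowerSeries (Fin n) k)
    (i : Fin n) (β : Fin n →₀ ℕ) : k :=
  (β.prod fun _ m => (m.factorial : k)) * MvPowerSeries.coeff β (H i)

set_option maxHeartbeats 2000000
namespace ClassEnergy
open Finset

variable {k : Type*} [Field k] {n p : ℕ} (Hc : Fin n → (Fin n →₀ ℕ) → k)

lemma emb_apply_fst_ne {ℓ : Fin p} {β : Fin n →₀ ℕ} {x : Fin p × Fin n} (h : x.1 ≠ ℓ) :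
    emb ℓ β x = 0 :=
  Finsupp.mapDomain_notin_range _ _ (by rintro ⟨m, rfl⟩; exact h rfl)

lemma emb_apply (ℓ : Fin p) (β : Fin n →₀ ℕ) (m : Fin n) : emb ℓ β (ℓ, m) = β m :=
  Finsupp.mapDomain_apply (fun a b h => congrArg Prod.snd h) _ _

lemma emb_support {ℓ : Fin p} {β : Fin n →₀ ℕ} : ∀ x ∈ (emb ℓ β).support, x.1 = ℓ := by
  intro x hx
  by_contra h
  exact (Finsupp.mem_support_iff.1 hx) (emb_apply_fst_ne h)

lemma blockRestrict_emb (ℓ : Fin p) (β : Fin n →₀ ℕ) : blockRestrict (emb ℓ β) ℓ = β :=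
  Finsupp.ext fun m => by
    simp only [blockRestrict, Finsupp.comapDomain_apply, emb_apply]
    exact emb_apply ℓ β m

lemma invFact_ne_zero [CharZero k] (β : Fin n →₀ ℕ) : (invFact β : k) ≠ 0 := by
  apply inv_ne_zero
  rw [Finsupp.prod]
  apply Finset.prod_ne_zero_iff.2
  intro m _
  exact Nat.cast_ne_zero.2 (Nat.factorial_ne_zero _)

lemma coeff_jacBlock_emb (ℓ : Fin p) (i j : Fin n) (β : Fin n →₀ ℕ) :
    MvPowerSeries.coeff (emb ℓ β) (jacBlock Hc ℓ i j)
      = Hc i (β + Finsupp.single j 1) * invFact β := by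
  show (if _ then _ else _) = _
  rw [if_pos emb_support, blockRestrict_emb]

lemma coeff_jacBlock_ne {ℓ : Fin p} (i j : Fin n) {γ : (Fin p × Fin n) →₀ ℕ}
    (h : ¬ ∀ x ∈ γ.support, x.1 = ℓ) :
    MvPowerSeries.coeff γ (jacBlock Hc ℓ i j) = 0 := if_neg h

lemma support_listProd (l : List (Fin p)) : ∀ (i j : Fin n) (δ : (Fin p × Fin n) →₀ ℕ),
    MvPowerSeries.coeff δ ((l.map fun ℓ => Matrix.of (jacBlock Hc ℓ)).prod i j) ≠ 0 →
    ∀ x ∈ δ.support, x.1 ∈ l := by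
  induction l with
  | nil =>
    intro i j δ h x hx
    simp only [List.map_nil, List.prod_nil] at h
    rw [Matrix.one_apply] at h
    by_cases hij : i = j
    · rw [if_pos hij, MvPowerSeries.coeff_one] at h
      split at h
      · next hδ => rw [hδ] at hx; simp at hx
      · exact absurd rfl h
    · rw [if_neg hij, map_zero] at h; exact absurd rfl h
  | cons a l' ih =>
    intro i j δ h x hx
    simp only [List.map_cons, List.prod_cons] at h
    rw [Matrix.mul_apply, map_sum] at h
    obtain ⟨s, -, hs⟩ := Finset.exists_ne_zero_of_sum_ne_zero h
    rw [MvPowerSeries.coeff_mul] at hs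
    obtain ⟨⟨u, v⟩, huv, hterm⟩ := Finset.exists_ne_zero_of_sum_ne_zero hs
    have h1 : ∀ y ∈ u.support, y.1 = a := by
      by_contra hc
      rw [show MvPowerSeries.coeff u (Matrix.of (jacBlock Hc a) i s) = 0 from
        coeff_jacBlock_ne Hc i s hc, zero_mul] at hterm
      exact hterm rfl
    have h2 : ∀ y ∈ v.support, y.1 ∈ l' := by
      apply ih s j v
      intro h0
      rw [h0, mul_zero] at hterm
      exact hterm rfl
    have hsum : u + v = δ := Finset.HasAntidiagonal.mem_antidiagonal.1 huv
    have hδx : δ x ≠ 0 := Finsupp.mem_support_iff.1 hx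
    rw [← hsum, Finsupp.add_apply] at hδx
    have : u x ≠ 0 ∨ v x ≠ 0 := by omega
    rcases this with h' | h'
    · exact List.mem_cons.2 (Or.inl (h1 x (Finsupp.mem_support_iff.2 h')))
    · exact List.mem_cons.2 (Or.inr (h2 x (Finsupp.mem_support_iff.2 h')))

lemma sum_emb_support (β : Fin p → (Fin n →₀ ℕ)) :
    ∀ (l : List (Fin p)) (x : Fin p × Fin n),
      ((l.map fun ℓ => emb ℓ (β ℓ)).sum) x ≠ 0 → x.1 ∈ l := by
  intro l
  induction l with
  | nil => intro x hx; simp at hx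
  | cons a l' ih =>
    intro x hx
    rw [List.map_cons, List.sum_cons, Finsupp.add_apply] at hx
    have : emb a (β a) x ≠ 0 ∨ ((l'.map fun ℓ => emb ℓ (β ℓ)).sum) x ≠ 0 := by omega
    rcases this with h' | h'
    · refine List.mem_cons.2 (Or.inl ?_)
      by_contra hc
      exact h' (emb_apply_fst_ne hc)
    · exact List.mem_cons.2 (Or.inr (ih x h'))

lemma value_listProd (β : Fin p → (Fin n →₀ ℕ)) :
    ∀ (l : List (Fin p)), l.Nodup → ∀ (i j : Fin n),
    MvPowerSeries.coeff ((l.map fun ℓ => emb ℓ (β ℓ)).sum)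
        ((l.map fun ℓ => Matrix.of (jacBlock Hc ℓ)).prod i j)
      = (l.map fun ℓ => (invFact (β ℓ) : k)).prod *
        ((l.map fun ℓ => Matrix.of fun a b => Hc a (β ℓ + Finsupp.single b 1)).prod i j) := by
  intro l
  induction l with
  | nil =>
    intro _ i j
    simp only [List.map_nil, List.sum_nil, List.prod_nil, one_mul]
    rw [Matrix.one_apply, Matrix.one_apply]
    by_cases hij : i = j
    · rw [if_pos hij, if_pos hij, MvPowerSeries.coeff_one, if_pos rfl]
    · rw [if_neg hij, if_neg hij, map_zero]
  | cons a l' ih =>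
    intro hnd i j
    obtain ⟨ha, hnd'⟩ := List.nodup_cons.1 hnd
    simp only [List.map_cons, List.sum_cons, List.prod_cons]
    set γ' : (Fin p × Fin n) →₀ ℕ := (l'.map fun ℓ => emb ℓ (β ℓ)).sum with hγ'
    clear_value γ'
    rw [Matrix.mul_apply, map_sum]
    have key : ∀ s : Fin n,
        MvPowerSeries.coeff (emb a (β a) + γ')
          (Matrix.of (jacBlock Hc a) i s *
            ((l'.map fun ℓ => Matrix.of (jacBlock Hc ℓ)).prod s j))
        = (Hc i (β a + Finsupp.single s 1) * invFact (β a)) *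
          MvPowerSeries.coeff γ' ((l'.map fun ℓ => Matrix.of (jacBlock Hc ℓ)).prod s j) := by
      intro s
      rw [MvPowerSeries.coeff_mul]
      have hm : (emb a (β a), γ') ∈ Finset.HasAntidiagonal.antidiagonal (emb a (β a) + γ') :=
        Finset.HasAntidiagonal.mem_antidiagonal.2 rfl
      rw [Finset.sum_eq_single_of_mem (emb a (β a), γ') hm]
      · simp only [Matrix.of_apply, coeff_jacBlock_emb Hc]
      · rintro ⟨u, v⟩ huv hne
        by_contra hterm0
        have h1 : MvPowerSeries.coeff u (Matrix.of (jacBlock Hc a) i s) ≠ 0 :=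
          fun h0 => hterm0 (by rw [h0, zero_mul])
        have h2 : MvPowerSeries.coeff v
            ((l'.map fun ℓ => Matrix.of (jacBlock Hc ℓ)).prod s j) ≠ 0 :=
          fun h0 => hterm0 (by rw [h0, mul_zero])
        have hu : ∀ y ∈ u.support, y.1 = a := by
          by_contra hc
          exact h1 (coeff_jacBlock_ne Hc i s hc)
        have hv := support_listProd Hc l' s j v h2
        have hsum : u + v = emb a (β a) + γ' := Finset.HasAntidiagonal.mem_antidiagonal.1 huv
        have hueq : u = emb a (β a) := by
          ext y
          by_cases hy : y.1 = a
          · have hvy : v y = 0 := by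
              by_contra hvy
              exact ha (hy ▸ hv y (Finsupp.mem_support_iff.2 hvy))
            have hγ'y : γ' y = 0 := by
              by_contra hgy
              exact ha (hy ▸ sum_emb_support β l' y (hγ' ▸ hgy))
            have h3 := DFunLike.congr_fun hsum y
            simp only [Finsupp.add_apply] at h3
            rw [hvy, hγ'y] at h3
            omega
          · have h0 : u y = 0 := by
              by_contra huy
              exact hy (hu y (Finsupp.mem_support_iff.2 huy))
            rw [h0, emb_apply_fst_ne hy]
        apply hne
        have hveq : v = γ' := by
          have := hsum
          rw [hueq] at this
          exact add_left_cancel this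
        rw [hueq, hveq]
    have ihs : ∀ s, MvPowerSeries.coeff γ'
        ((l'.map fun ℓ => Matrix.of (jacBlock Hc ℓ)).prod s j)
        = (l'.map fun ℓ => (invFact (β ℓ) : k)).prod *
          ((l'.map fun ℓ => Matrix.of fun a b => Hc a (β ℓ + Finsupp.single b 1)).prod s j) :=
      fun s => ih hnd' s j
    calc ∑ s, MvPowerSeries.coeff (emb a (β a) + γ')
          (Matrix.of (jacBlock Hc a) i s *
            ((l'.map fun ℓ => Matrix.of (jacBlock Hc ℓ)).prod s j))
        = ∑ s, (Hc i (β a + Finsupp.single s 1) * invFact (β a)) *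
            ((l'.map fun ℓ => (invFact (β ℓ) : k)).prod *
              ((l'.map fun ℓ => Matrix.of fun a b =>
                Hc a (β ℓ + Finsupp.single b 1)).prod s j)) := by
          refine Finset.sum_congr rfl fun s _ => ?_
          rw [key s, ihs s]
      _ = _ := by
          rw [Matrix.mul_apply, Finset.mul_sum]
          refine Finset.sum_congr rfl fun s _ => ?_
          simp only [Matrix.of_apply]
          ring

end ClassEnergy

namespace ClassEnergy
open Finset

lemma entries_zero {k : Type*} [Field k] [CharZero k] {n p : ℕ}
    (Hc : Fin n → (Fin n →₀ ℕ) → k)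
    (hstrong : (List.ofFn fun ℓ : Fin p => Matrix.of (jacBlock Hc ℓ)).prod = 0)
    (β : Fin p → (Fin n →₀ ℕ)) (i j : Fin n) :
    ((List.finRange p).map fun ℓ =>
      Matrix.of fun a b => Hc a (β ℓ + Finsupp.single b 1)).prod i j = 0 := by
  have hv := value_listProd Hc β (List.finRange p) (List.nodup_finRange p) i j
  rw [List.ofFn_eq_map] at hstrong
  rw [hstrong, Matrix.zero_apply, map_zero] at hv
  have hne : ((List.finRange p).map fun ℓ => (invFact (β ℓ) : k)).prod ≠ 0 := by
    apply List.prod_ne_zero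
    intro h0
    obtain ⟨ℓ, -, hℓ⟩ := List.mem_map.1 h0
    exact invFact_ne_zero (β ℓ) hℓ
  rcases mul_eq_zero.1 hv.symm with h | h
  · exact absurd h hne
  · exact h

/-- extension of a path: value `i` at `0`, `g` in the middle, `j` at the end. -/
def pathExt {m : ℕ} (q : ℕ) (i j : Fin m) (g : Fin q → Fin m) : ℕ → Fin m :=
  fun ℓ => if ℓ = 0 then i else if h : ℓ - 1 < q then g ⟨ℓ - 1, h⟩ else j

lemma pathExt_zero {m q : ℕ} (i j : Fin m) (g : Fin q → Fin m) : pathExt q i j g 0 = i := rfl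

lemma pathExt_succ {m q : ℕ} (i j s : Fin m) (g' : Fin q → Fin m) (r : ℕ) :
    pathExt (q+1) i j (Fin.cons s g') (r+1) = pathExt q s j g' r := by
  cases r with
  | zero =>
    simp only [pathExt, Nat.add_sub_cancel, if_neg (Nat.one_ne_zero), if_pos rfl]
    rw [dif_pos (Nat.succ_pos q)]
    rfl
  | succ r =>
    simp only [pathExt, Nat.add_sub_cancel, if_neg (Nat.succ_ne_zero _)]
    by_cases h : r < q
    · rw [dif_pos (by omega : r + 1 < q + 1), dif_pos h]
      exact @Fin.cons_succ q (fun _ => Fin m) s g' ⟨r, h⟩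
    · rw [dif_neg (by omega), dif_neg h]

lemma pathSum {k : Type*} [CommRing k] {m : ℕ} :
    ∀ (q : ℕ) (W : ℕ → Matrix (Fin m) (Fin m) k) (i j : Fin m),
    ((List.range (q+1)).map W).prod i j
      = ∑ g : Fin q → Fin m, ∏ ℓ ∈ Finset.range (q+1),
          W ℓ (pathExt q i j g ℓ) (pathExt q i j g (ℓ+1)) := by
  intro q
  induction q with
  | zero =>
    intro W i j
    rw [List.range_succ, List.range_zero, List.nil_append]
    simp only [List.map_cons, List.map_nil, List.prod_cons, List.prod_nil, mul_one]
    rw [Finset.sum_eq_single (fun x : Fin 0 => x.elim0)]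
    · rw [Finset.prod_range_one]
      have h1 : pathExt 0 i j (fun x : Fin 0 => x.elim0) 0 = i := rfl
      have h2 : pathExt 0 i j (fun x : Fin 0 => x.elim0) 1 = j := by
        simp [pathExt]
      rw [h1, h2]
    · intro g _ hg
      exact absurd (funext fun x => x.elim0) hg
    · intro h
      exact absurd (Finset.mem_univ _) h
  | succ q ih =>
    intro W i j
    rw [List.range_succ_eq_map, List.map_cons, List.prod_cons, List.map_map, Matrix.mul_apply]
    have hLHS : ∀ s, ((List.range (q+1)).map (W ∘ Nat.succ)).prod s j
        = ∑ g' : Fin q → Fin m, ∏ ℓ ∈ Finset.range (q+1),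
            W (ℓ+1) (pathExt q s j g' ℓ) (pathExt q s j g' (ℓ+1)) := by
      intro s
      rw [show (W ∘ Nat.succ) = (fun t => W (t+1)) from rfl, ih (fun t => W (t+1)) s j]
    rw [← (Fin.consEquiv (fun _ : Fin (q+1) => Fin m)).sum_comp, Fintype.sum_prod_type]
    have hRHS : ∀ (s : Fin m) (g' : Fin q → Fin m),
        (∏ ℓ ∈ Finset.range (q+2),
          W ℓ (pathExt (q+1) i j (Fin.cons s g') ℓ) (pathExt (q+1) i j (Fin.cons s g') (ℓ+1)))
        = W 0 i s * ∏ ℓ ∈ Finset.range (q+1),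
            W (ℓ+1) (pathExt q s j g' ℓ) (pathExt q s j g' (ℓ+1)) := by
      intro s g'
      rw [Finset.prod_range_succ']
      have h0 : pathExt (q+1) i j (Fin.cons s g') 0 = i := rfl
      have h1 : pathExt (q+1) i j (Fin.cons s g') 1 = s := by
        show (if _ then _ else _) = s
        rw [if_neg one_ne_zero, dif_pos (by omega : (1:ℕ) - 1 < q + 1)]
        exact @Fin.cons_zero q (fun _ => Fin m) s g' 
      rw [h0, h1, mul_comm]
      congr 1
      refine Finset.prod_congr rfl fun ℓ _ => ?_
      rw [pathExt_succ, pathExt_succ]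
    calc ∑ s, W 0 i s * ((List.range (q+1)).map (W ∘ Nat.succ)).prod s j
        = ∑ s, ∑ g' : Fin q → Fin m, W 0 i s * ∏ ℓ ∈ Finset.range (q+1),
            W (ℓ+1) (pathExt q s j g' ℓ) (pathExt q s j g' (ℓ+1)) := by
          refine Finset.sum_congr rfl fun s _ => ?_
          rw [hLHS s, Finset.mul_sum]
      _ = _ := by
          refine Finset.sum_congr rfl fun s _ => Finset.sum_congr rfl fun g' _ => ?_
          exact (hRHS s g').symm

end ClassEnergy

namespace ClassEnergy
open Finset

variable {n : ℕ} {α : Fin n →₀ ℕ} {F : Finset (Finset (Lbl n α))}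

lemma depth_anti {S S' : Finset (Lbl n α)} (h : S ⊆ S') : depthT F S' ≤ depthT F S := by
  apply Finset.card_le_card
  intro U hU
  rw [Finset.mem_filter] at hU ⊢
  exact ⟨hU.1, lt_of_le_of_lt h hU.2⟩

lemma depth_strict {S S' : Finset (Lbl n α)} (hS' : S' ∈ F) (h : S ⊂ S') :
    depthT F S' < depthT F S := by
  apply Finset.card_lt_card
  rw [Finset.ssubset_iff_of_subset]
  · exact ⟨S', Finset.mem_filter.2 ⟨hS', h⟩, fun hc => (Finset.mem_filter.1 hc).2.false⟩
  · intro U hU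
    rw [Finset.mem_filter] at hU ⊢
    exact ⟨hU.1, h.trans hU.2⟩

lemma chain_total (hF : Laminar F) {S S' : Finset (Lbl n α)} (hS : S ∈ F) (hS' : S' ∈ F)
    {x : Lbl n α} (hx : x ∈ S) (hx' : x ∈ S') : S ⊆ S' ∨ S' ⊆ S := by
  rcases hF.2.2.2 S hS S' hS' with h | h | h
  · exact Or.inl h
  · exact Or.inr h
  · exact absurd hx' (Finset.disjoint_left.1 h hx)

lemma parent_unique (hF : Laminar F) {C S S' : Finset (Lbl n α)}
    (hS : S ∈ F) (hS' : S' ∈ F)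
    (hC : C ∈ childrenT F S) (hC' : C ∈ childrenT F S') : S = S' := by
  rw [childrenT, Finset.mem_filter] at hC hC'
  obtain ⟨hCF, hCS, hmax⟩ := hC
  obtain ⟨-, hCS', hmax'⟩ := hC'
  have hCne : C.Nonempty :=
    Finset.nonempty_iff_ne_empty.2 (fun h => hF.2.2.1 (h ▸ hCF))
  obtain ⟨x, hx⟩ := hCne
  rcases chain_total hF hS hS' (hCS.subset hx) (hCS'.subset hx) with h | h
  · by_contra hne
    exact hmax' ⟨S, hS, hCS, Finset.ssubset_iff_subset_ne.2 ⟨h, hne⟩⟩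
  · by_contra hne
    exact hmax ⟨S', hS', hCS', Finset.ssubset_iff_subset_ne.2 ⟨h, fun h' => hne h'.symm⟩⟩

end ClassEnergy

open ClassEnergy in
open scoped Classical in
/-- If `JH` is strongly nilpotent with index `p`, then for any tree `T ∈ 𝕊_{i,α}` of height
at least `p`, the sum of the energies over the equivalence class of `T` (the trees agreeing
with `T` except for the types of the middle spine vertices `v₁,…,v_{p-1}`) vanishes. -/
theorem class_energy_sum_vanishes
    {k : Type*} [Field k] [CharZero k] {n p : ℕ} (hp : 0 < p)
    (H : Fin n → MvPowerSeries (Fin n) k)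
    (hH2 : ∀ i (β : Fin n →₀ ℕ), (β.sum fun _ m => m) < 2 →
      MvPowerSeries.coeff β (H i) = 0)
    (hstrong : (List.ofFn fun ℓ : Fin p =>
      Matrix.of (jacBlock (coefSc H) ℓ)).prod = 0)
    (α : Fin n →₀ ℕ) (i : Fin n)
    (T : TreeData n α) (hT : Good i T) (htall : p ≤ heightT T.1) :
    ∑ T' ∈ Finset.univ.filter (fun T' : TreeData n α => SpineRel p T T'),
      energy (coefSc H) T'.1 T'.2 = 0 := by
  obtain ⟨q, rfl⟩ : ∃ q, p = q + 1 := ⟨p - 1, (Nat.succ_pred_eq_of_pos hp).symm⟩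
  obtain ⟨F, τ⟩ := T
  obtain ⟨hLam, -, -, -⟩ := hT
  simp only at htall ⊢
  -- the deepest leaf
  have hne : (deepLeaves (q+1) F).Nonempty := by
    obtain ⟨S, hSF, hSd⟩ := (Finset.le_sup_iff (Nat.succ_pos q)).1 htall
    have hSne : S.Nonempty := Finset.nonempty_iff_ne_empty.2 (fun h => hLam.2.2.1 (h ▸ hSF))
    obtain ⟨x, hx⟩ := hSne
    refine ⟨x, ?_⟩
    rw [deepLeaves, Finset.mem_filter]
    exact ⟨Finset.mem_univ x,
      le_trans hSd (depth_anti (Finset.singleton_subset_iff.2 hx))⟩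
  set xs : Lbl n α := (deepLeaves (q+1) F).max' hne with hxs
  set D : ℕ := depthT F ({xs} : Finset (Lbl n α)) with hDdef
  have hD : q + 1 ≤ D := by
    have h := (deepLeaves (q+1) F).max'_mem hne
    simp only [deepLeaves, Finset.mem_filter] at h
    exact h.2
  obtain ⟨D0, hD0⟩ : ∃ D0, D = D0 + (q+1) := ⟨D - (q+1), by omega⟩
  -- the vertices of the chain above xs
  have exA : ∀ j : ℕ, ∃ S, S ∈ F ∧ xs ∈ S ∧ (j ≤ D → depthT F S = j) := by
    have step : ∀ S, S ∈ F → xs ∈ S → 0 < depthT F S →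
        ∃ T', T' ∈ F ∧ xs ∈ T' ∧ depthT F T' = depthT F S - 1 := by
      intro S hSF hxS hd
      have hup : (F.filter fun U => S ⊂ U).Nonempty := Finset.card_pos.1 hd
      obtain ⟨T', hT'mem, hT'min⟩ := Finset.exists_min_image _ Finset.card hup
      rw [Finset.mem_filter] at hT'mem
      obtain ⟨hT'F, hST'⟩ := hT'mem
      have hxT' : xs ∈ T' := hST'.subset hxS
      refine ⟨T', hT'F, hxT', ?_⟩
      have hset : F.filter (fun U => T' ⊂ U) = (F.filter fun U => S ⊂ U).erase T' := by
        ext U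
        rw [Finset.mem_erase, Finset.mem_filter, Finset.mem_filter]
        constructor
        · rintro ⟨hUF, hTU⟩
          exact ⟨fun h => (h ▸ hTU).2 (h ▸ hTU).1, hUF, hST'.trans hTU⟩
        · rintro ⟨hUT, hUF, hSU⟩
          refine ⟨hUF, ?_⟩
          have hxU : xs ∈ U := hSU.subset hxS
          rcases chain_total hLam hT'F hUF hxT' hxU with h | h
          · exact Finset.ssubset_iff_subset_ne.2 ⟨h, fun h' => hUT h'.symm⟩
          · have hUup : U ∈ F.filter fun U => S ⊂ U := Finset.mem_filter.2 ⟨hUF, hSU⟩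
            have h2 := hT'min U hUup
            have hUT' : U ⊂ T' := Finset.ssubset_iff_subset_ne.2 ⟨h, hUT⟩
            exact absurd (Finset.card_lt_card hUT') (not_lt.2 h2)
      show (F.filter fun U => T' ⊂ U).card = (F.filter fun U => S ⊂ U).card - 1
      rw [hset, Finset.card_erase_of_mem (Finset.mem_filter.2 ⟨hT'F, hST'⟩)]
    have desc : ∀ m : ℕ, ∃ S, S ∈ F ∧ xs ∈ S ∧ depthT F S = D - m := by
      intro m
      induction m with
      | zero =>
        exact ⟨{xs}, hLam.2.1 xs, Finset.mem_singleton_self xs, by omega⟩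
      | succ m ihm =>
        obtain ⟨S, hSF, hxS, hSd⟩ := ihm
        by_cases h0 : 0 < depthT F S
        · obtain ⟨T', h1, h2, h3⟩ := step S hSF hxS h0
          exact ⟨T', h1, h2, by omega⟩
        · exact ⟨S, hSF, hxS, by omega⟩
    intro j
    by_cases hj : j ≤ D
    · obtain ⟨S, h1, h2, h3⟩ := desc (D - j)
      exact ⟨S, h1, h2, fun _ => by omega⟩
    · exact ⟨{xs}, hLam.2.1 xs, Finset.mem_singleton_self xs, fun h => absurd h hj⟩
  choose A hAF hAx hAd using exA
  have chain_eq : ∀ S, S ∈ F → xs ∈ S → ∀ j, j ≤ D → depthT F S = j → S = A j := by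
    intro S hSF hxS j hj hd
    have h2 := hAd j hj
    by_contra hne0
    rcases chain_total hLam hSF (hAF j) hxS (hAx j) with h | h
    · have := depth_strict (hAF j) (Finset.ssubset_iff_subset_ne.2 ⟨h, hne0⟩)
      omega
    · have := depth_strict hSF
        (Finset.ssubset_iff_subset_ne.2 ⟨h, fun h' => hne0 h'.symm⟩)
      omega
  have hAinj : ∀ j j', j ≤ D → j' ≤ D → A j = A j' → j = j' := by
    intro j j' hj hj' hEq
    have h1 := hAd j hj
    have h2 := hAd j' hj'
    rw [hEq] at h1
    omega
  have hAss : ∀ j j', j < j' → j' ≤ D → A j' ⊂ A j := by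
    intro j j' hjj hj'
    rcases chain_total hLam (hAF j') (hAF j) (hAx j') (hAx j) with h | h
    · exact Finset.ssubset_iff_subset_ne.2
        ⟨h, fun he => by have := hAinj j' j hj' (by omega) he; omega⟩
    · have h3 := depth_anti (F := F) h
      rw [hAd j (by omega), hAd j' hj'] at h3
      omega
  have hchild : ∀ j, j + 1 ≤ D → A (j+1) ∈ childrenT F (A j) := by
    intro j hj
    rw [childrenT, Finset.mem_filter]
    refine ⟨hAF _, hAss j (j+1) (by omega) hj, ?_⟩
    rintro ⟨T', hT'F, h1, h2⟩
    have d1 := depth_strict hT'F h1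
    have d2 := depth_strict (hAF j) h2
    rw [hAd (j+1) hj] at d1
    rw [hAd j (by omega)] at d2
    omega
  have hinternal : ∀ j, j < D → 1 < (A j).card := by
    intro j hj
    have hss := hAss j (j+1) (by omega) (by omega)
    have h1 : 0 < (A (j+1)).card := Finset.card_pos.2 ⟨xs, hAx _⟩
    have h2 := Finset.card_lt_card hss
    omega
  -- spineMid
  set SM : Finset (Finset (Lbl n α)) := spineMid (q+1) F with hSMdef
  have hSM : SM = F.filter fun S => xs ∈ S ∧
      D - (q+1) + 1 ≤ depthT F S ∧ depthT F S ≤ D - 1 := by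
    rw [hSMdef, spineMid, dif_pos hne]
  have hSMchar : ∀ S, S ∈ SM ↔ ∃ j, D0 + 1 ≤ j ∧ j ≤ D0 + q ∧ S = A j := by
    intro S
    rw [hSM, Finset.mem_filter]
    constructor
    · rintro ⟨hSF, hxS, h1, h2⟩
      exact ⟨depthT F S, by omega, by omega,
        chain_eq S hSF hxS _ (by omega) rfl⟩
    · rintro ⟨j, h1, h2, rfl⟩
      refine ⟨hAF j, hAx j, ?_, ?_⟩ <;> rw [hAd j (by omega)] <;> omega
  have hAmemSM : ∀ j, D0 + 1 ≤ j → j ≤ D0 + q → A j ∈ SM :=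
    fun j h1 h2 => (hSMchar _).2 ⟨j, h1, h2, rfl⟩
  have hnotSM : ∀ j, j ≤ D → ¬(D0 + 1 ≤ j ∧ j ≤ D0 + q) → A j ∉ SM := by
    intro j hj hcond hmem
    obtain ⟨j', h1, h2, hEq⟩ := (hSMchar _).1 hmem
    have := hAinj j j' hj (by omega) hEq
    omega
  -- the spine-top vertices
  set ST : Finset (Finset (Lbl n α)) :=
    (Finset.range (q+1)).image (fun ℓ => A (D0 + ℓ)) with hSTdef
  have hSTmem : ∀ S, S ∈ ST ↔ ∃ ℓ, ℓ ≤ q ∧ S = A (D0 + ℓ) := by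
    intro S
    rw [hSTdef, Finset.mem_image]
    constructor
    · rintro ⟨ℓ, hℓ, rfl⟩
      exact ⟨ℓ, by have := Finset.mem_range.1 hℓ; omega, rfl⟩
    · rintro ⟨ℓ, hℓ, rfl⟩
      exact ⟨ℓ, Finset.mem_range.2 (by omega), rfl⟩
  have hchild_notSM : ∀ S, S ∈ F → S ∉ ST → ∀ C, C ∈ childrenT F S → C ∉ SM := by
    intro S hSF hSnotST C hC hCSM
    obtain ⟨j, h1, h2, rfl⟩ := (hSMchar _).1 hCSM
    have hC' : A j ∈ childrenT F (A (j-1)) := by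
      have h3 := hchild (j-1) (by omega)
      rwa [show j - 1 + 1 = j by omega] at h3
    have hSeq : S = A (j-1) := parent_unique hLam hSF (hAF _) hC hC'
    apply hSnotST
    rw [hSTmem]
    exact ⟨j - 1 - D0, by omega, by rw [hSeq]; congr 1; omega⟩
  have hSMsubST : ∀ S, S ∈ SM → S ∈ ST := by
    intro S hSmem
    obtain ⟨j, h1, h2, rfl⟩ := (hSMchar _).1 hSmem
    rw [hSTmem]
    exact ⟨j - D0, by omega, by congr 1; omega⟩
  -- the retyping functions
  set τg : (Fin q → Fin n) → Finset (Lbl n α) → Fin n :=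
    fun g S => if h : ∃ r : Fin q, A (D0 + 1 + r) = S then g h.choose else τ S
    with hτgdef
  have hτg_spine : ∀ g (r : Fin q), τg g (A (D0 + 1 + r)) = g r := by
    intro g r
    have hex : ∃ r' : Fin q, A (D0 + 1 + r') = A (D0 + 1 + r) := ⟨r, rfl⟩
    show (if h : _ then _ else _) = g r
    rw [dif_pos hex]
    congr 1
    have hc := hex.choose_spec
    have h1 := hAinj (D0 + 1 + hex.choose) (D0 + 1 + r)
      (by have := hex.choose.isLt; omega) (by have := r.isLt; omega) hc
    exact Fin.ext (by omega)
  have hτg_off : ∀ g S, S ∉ SM → τg g S = τ S := by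
    intro g S hS
    show (if h : _ then _ else _) = τ S
    rw [dif_neg]
    rintro ⟨r, rfl⟩
    exact hS (hAmemSM _ (by omega) (by have := r.isLt; omega))
  -- the inverse of the reindexing
  have hback : ∀ T' : TreeData n α, F = T'.1 →
      (∀ S ∉ spineMid (q+1) F, τ S = T'.2 S) →
      ((F, τg (fun r => T'.2 (A (D0 + 1 + r)))) : TreeData n α) = T' := by
    intro T' h1 h2
    obtain ⟨F', τ'⟩ := T'
    simp only at h1 h2
    subst h1
    show ((F, τg (fun r => τ' (A (D0 + 1 + r)))) : TreeData n α) = (F, τ')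
    have hτeq : τg (fun r => τ' (A (D0 + 1 + r))) = τ' := by
      funext S
      show (if h : _ then _ else _) = τ' S
      split
      · next h =>
        exact congrArg τ' h.choose_spec
      · next h =>
        have hSnot : S ∉ SM := by
          intro hmem
          obtain ⟨j, hj1, hj2, rfl⟩ := (hSMchar _).1 hmem
          exact h ⟨⟨j - (D0 + 1), by omega⟩, by congr 1; simp only []; omega⟩
        exact h2 S (hSMdef ▸ hSnot)
    rw [hτeq]
  -- reindex the sum over the class by retypings
  have hreindex :
      ∑ T' ∈ Finset.univ.filter (fun T' : TreeData n α => SpineRel (q+1) (F, τ) T'),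
        energy (coefSc H) T'.1 T'.2
      = ∑ g : Fin q → Fin n, energy (coefSc H) F (τg g) := by
    refine Finset.sum_bij' (fun T' _ => fun r => T'.2 (A (D0 + 1 + r)))
      (fun g _ => (F, τg g)) (fun a ha => Finset.mem_univ _) ?_ ?_ ?_ ?_
    · intro g hg
      rw [Finset.mem_filter]
      exact ⟨Finset.mem_univ _, rfl, fun S hS => (hτg_off g S (hSMdef ▸ hS)).symm⟩
    · intro T' hT'
      rw [Finset.mem_filter] at hT'
      exact hback T' hT'.2.1 hT'.2.2
    · intro g hg
      funext r
      exact hτg_spine g r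
    · intro T' hT'
      rw [Finset.mem_filter] at hT'
      have h := hback T' hT'.2.1 hT'.2.2
      obtain ⟨F', τ'⟩ := T'
      rw [Prod.mk.injEq] at h
      obtain ⟨hF', hτ'⟩ := h
      show energy (coefSc H) F' τ' = energy (coefSc H) F _
      rw [hτ', hF']
  rw [hreindex]
  -- energy of a retyped tree
  set Hcc : Fin n → (Fin n →₀ ℕ) → k := coefSc H with hHcc
  set i0 : Fin n := τ (A D0) with hi0
  set j0 : Fin n := τ (A (D0 + (q+1))) with hj0
  set β' : ℕ → (Fin n →₀ ℕ) :=
    fun j => ∑ C ∈ (childrenT F (A j)).erase (A (j+1)), Finsupp.single (τ C) 1 with hβ'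
  set W : ℕ → Matrix (Fin n) (Fin n) k :=
    fun ℓ' => Matrix.of fun a b => Hcc a (β' (D0+ℓ') + Finsupp.single b 1) with hW
  have hSTsubI : ST ⊆ F.filter (fun S => 1 < S.card) := by
    intro S hS
    obtain ⟨ℓ, hℓ, rfl⟩ := (hSTmem S).1 hS
    exact Finset.mem_filter.2 ⟨hAF _, hinternal _ (by omega)⟩
  have houtdeg : ∀ (τ' : Finset (Lbl n α) → Fin n), (∀ S, S ∉ SM → τ' S = τ S) →
      ∀ j, j ≤ D0 + q →
      outdeg F τ' (A j) = β' j + Finsupp.single (τ' (A (j+1))) 1 := by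
    intro τ' hτ' j h2
    rw [outdeg, ← Finset.sum_erase_add _ _ (hchild j (by omega))]
    congr 1
    refine Finset.sum_congr rfl fun C hC => ?_
    have hCch := Finset.mem_of_mem_erase hC
    have hCne := Finset.ne_of_mem_erase hC
    have hCnot : C ∉ SM := by
      intro hCSM
      obtain ⟨j2, hj21, hj22, rfl⟩ := (hSMchar _).1 hCSM
      have hC' : A j2 ∈ childrenT F (A (j2 - 1)) := by
        have h3 := hchild (j2 - 1) (by omega)
        rwa [show j2 - 1 + 1 = j2 by omega] at h3
      have h4 := parent_unique hLam (hAF j) (hAF (j2-1)) hCch hC'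
      have h5 := hAinj j (j2 - 1) (by omega) (by omega) h4
      exact hCne (by congr 1; omega)
    rw [hτ' C hCnot]
  have hmain : ∀ g : Fin q → Fin n, energy Hcc F (τg g)
      = (∏ S ∈ (F.filter fun S => 1 < S.card) \ ST, Hcc (τ S) (outdeg F τ S)) *
        ∏ ℓ ∈ Finset.range (q+1),
          Hcc (pathExt q i0 j0 g ℓ)
            (β' (D0+ℓ) + Finsupp.single (pathExt q i0 j0 g (ℓ+1)) 1) := by
    intro g
    have hoff : ∀ S, S ∉ SM → τg g S = τ S := hτg_off g
    rw [energy, ← Finset.prod_sdiff hSTsubI]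
    congr 1
    · refine Finset.prod_congr rfl fun S hS => ?_
      obtain ⟨hSI, hSnotST⟩ := Finset.mem_sdiff.1 hS
      have hSF : S ∈ F := (Finset.mem_filter.1 hSI).1
      have hSnotSM : S ∉ SM := fun hSm => hSnotST (hSMsubST S hSm)
      rw [hoff S hSnotSM]
      congr 1
      rw [outdeg, outdeg]
      refine Finset.sum_congr rfl fun C hC => ?_
      rw [hoff C (hchild_notSM S hSF hSnotST C hC)]
    · rw [hSTdef, Finset.prod_image ?inj]
      case inj =>
        intro x hx y hy hxy
        have := hAinj (D0+x) (D0+y) (by have := Finset.mem_range.1 hx; omega)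
          (by have := Finset.mem_range.1 hy; omega) hxy
        omega
      have htype : ∀ m, m ≤ q + 1 → τg g (A (D0 + m)) = pathExt q i0 j0 g m := by
        intro m hm
        rcases Nat.eq_zero_or_pos m with rfl | hm0
        · show τg g (A D0) = pathExt q i0 j0 g 0
          rw [hoff _ (hnotSM D0 (by omega) (by omega))]
          rfl
        · by_cases hmq : m ≤ q
          · have hidx : A (D0 + m) = A (D0 + 1 + ((⟨m - 1, by omega⟩ : Fin q) : ℕ)) := by
              congr 1
              simp only []
              omega
            rw [hidx, hτg_spine]
            show _ = (if _ then _ else _)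
            rw [if_neg (by omega : ¬ m = 0), dif_pos (by omega : m - 1 < q)]
          · have hmeq : m = q + 1 := by omega
            subst hmeq
            rw [hoff _ (hnotSM (D0 + (q+1)) (by omega) (by omega))]
            show _ = (if _ then _ else _)
            rw [if_neg (by omega : ¬ q + 1 = 0), dif_neg (by omega : ¬ q + 1 - 1 < q)]
      refine Finset.prod_congr rfl fun ℓ hℓ => ?_
      have hℓq : ℓ ≤ q := by have := Finset.mem_range.1 hℓ; omega
      rw [houtdeg (τg g) hoff (D0 + ℓ) (by omega)]
      rw [htype ℓ (by omega)]
      rw [show D0 + ℓ + 1 = D0 + (ℓ + 1) by omega, htype (ℓ+1) (by omega)]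
  -- conclude via the matrix identity
  calc ∑ g : Fin q → Fin n, energy Hcc F (τg g)
      = (∏ S ∈ (F.filter fun S => 1 < S.card) \ ST, Hcc (τ S) (outdeg F τ S)) *
        ∑ g : Fin q → Fin n, ∏ ℓ ∈ Finset.range (q+1),
          W ℓ (pathExt q i0 j0 g ℓ) (pathExt q i0 j0 g (ℓ+1)) := by
        rw [Finset.mul_sum]
        refine Finset.sum_congr rfl fun g _ => ?_
        rw [hmain g]
        rfl
    _ = 0 := by
        rw [← pathSum q W i0 j0]
        have hlist : (List.range (q+1)).map W
            = (List.finRange (q+1)).map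
              (fun ℓf : Fin (q+1) => Matrix.of fun a b =>
                Hcc a (β' (D0 + (ℓf : ℕ)) + Finsupp.single b 1)) := by
          have hfr : (List.finRange (q+1)).map (fun x : Fin (q+1) => (x : ℕ))
              = List.range (q+1) := List.ext_getElem (by simp) (by simp)
          rw [← hfr, List.map_map]
          rfl
        rw [hlist, entries_zero Hcc hstrong (fun ℓf : Fin (q+1) => β' (D0 + (ℓf : ℕ))) i0 j0,
          mul_zero]

end
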